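/- arXiv:1505.02718 — 2 statements merged into one kernel-verified Lean document; each statement's English description precedes it below -/
import Mathlib

section
/- Let H be a real Hilbert space, I = {1,...,n}, μ > 0, and for each i ∈ I let λ_i > 0 with Σ_{i∈I} λ_i = 1 and let A_i : H ⇉ H be maximally monotone. Then: (a) for every α > 0, R_μ(αA, λ) = α R_{αμ}(A, λ), where αA = (αA₁,...,αA_n); in particular R_μ(A, λ) = μ⁻¹ R₁(μA, λ); and (b) if A : H ⇉ H is maximally monotone and A_i = A for every i ∈ I, then R_μ(A, λ) = A. -/
open RealInnerProductSpace

namespace SVP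

variable {H : Type*} [NormedAddCommGroup H] [InnerProductSpace ℝ H]

/-- Inverse of a set-valued mapping: `x ∈ inv A u ↔ u ∈ A x`. -/
def inv (A : H → Set H) : H → Set H := fun u => {x | u ∈ A x}

/-- Pointwise (Minkowski) sum of two set-valued mappings. -/
def add (A B : H → Set H) : H → Set H := fun x => {w | ∃ u ∈ A x, ∃ v ∈ B x, w = u + v}

/-- Pointwise difference of two set-valued mappings. -/
def sub (A B : H → Set H) : H → Set H := fun x => {w | ∃ u ∈ A x, ∃ v ∈ B x, w = u - v}

/-- Pointwise scalar multiple of a set-valued mapping. -/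
def smul (c : ℝ) (A : H → Set H) : H → Set H := fun x => (fun u => c • u) '' A x

/-- The identity as a set-valued mapping. -/
def id' : H → Set H := fun x => {x}

/-- Composition of set-valued mappings: `(comp A B) x = ⋃ y ∈ B x, A y`. -/
def comp (A B : H → Set H) : H → Set H := fun x => ⋃ y ∈ B x, A y

/-- Weighted pointwise (Minkowski) combination `Σ_i lam i • (B i)`. -/
def lcomb {n : ℕ} (lam : Fin n → ℝ) (B : Fin n → H → Set H) : H → Set H :=
  fun x => {u | ∃ v : Fin n → H, (∀ i, v i ∈ B i x) ∧ u = ∑ i, lam i • v i}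

/-- The `λ`-weighted resolvent average with parameter `μ`:
`R_μ(A, λ) = (Σ_i λ_i (A_i + μ⁻¹ Id)⁻¹)⁻¹ − μ⁻¹ Id`. -/
def resAvg {n : ℕ} (μ : ℝ) (lam : Fin n → ℝ) (A : Fin n → H → Set H) : H → Set H :=
  sub (inv (lcomb lam (fun i => inv (add (A i) (smul μ⁻¹ id'))))) (smul μ⁻¹ id')

/-- Monotonicity of a set-valued mapping. -/
def IsMonotone (A : H → Set H) : Prop :=
  ∀ ⦃x y u v : H⦄, u ∈ A x → v ∈ A y → 0 ≤ ⟪x - y, u - v⟫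

/-- Maximal monotonicity: the graph is not properly contained in the graph of
another monotone mapping. -/
def IsMaxMonotone (A : H → Set H) : Prop :=
  IsMonotone A ∧ ∀ B : H → Set H, IsMonotone B → (∀ x, A x ⊆ B x) → ∀ x, B x ⊆ A x

/-- Domain of a set-valued mapping. -/
def dom (A : H → Set H) : Set H := {x | (A x).Nonempty}

/-- Range of a set-valued mapping. -/
def ran (A : H → Set H) : Set H := {u | ∃ x, u ∈ A x}

/-- Graph of a set-valued mapping. -/
def graph (A : H → Set H) : Set (H × H) := {p | p.2 ∈ A p.1}

end SVP

variable {H : Type*} [NormedAddCommGroup H] [InnerProductSpace ℝ H] [CompleteSpace H]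

section Aux
variable {H : Type*} [NormedAddCommGroup H] [InnerProductSpace ℝ H]

lemma mem_resAvg {n : ℕ} (μ : ℝ) (lam : Fin n → ℝ) (A : Fin n → H → Set H)
    (x u : H) :
    u ∈ SVP.resAvg μ lam A x ↔
      ∃ v : Fin n → H, (∀ i, (u + μ⁻¹ • x) - μ⁻¹ • v i ∈ A i (v i)) ∧
        x = ∑ i, lam i • v i := by
  simp only [SVP.resAvg, SVP.sub, SVP.inv, SVP.lcomb, SVP.add, SVP.smul, SVP.id',
    Set.mem_setOf_eq, Set.image_singleton, Set.mem_singleton_iff]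
  constructor
  · rintro ⟨p, ⟨v, hv, hx⟩, q, rfl, rfl⟩
    refine ⟨v, fun i => ?_, hx⟩
    obtain ⟨a, ha, b, rfl, hp⟩ := hv i
    have : (p - μ⁻¹ • x) + μ⁻¹ • x - μ⁻¹ • v i = a := by rw [hp]; abel
    rwa [this]
  · rintro ⟨v, hv, hx⟩
    refine ⟨u + μ⁻¹ • x, ⟨v, fun i => ⟨_, hv i, _, rfl, by abel⟩, hx⟩, _, rfl, by abel⟩

lemma resAvg_smul_eq {n : ℕ} {α : ℝ} (hα : α ≠ 0) (μ : ℝ)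
    (lam : Fin n → ℝ) (A : Fin n → H → Set H) :
    SVP.resAvg μ lam (fun i => SVP.smul α (A i))
      = SVP.smul α (SVP.resAvg (α * μ) lam A) := by
  have key : ∀ (u x p : H), α⁻¹ • u + (α * μ)⁻¹ • x - (α * μ)⁻¹ • p
      = α⁻¹ • (u + μ⁻¹ • x - μ⁻¹ • p) := by
    intro u x p
    rw [mul_inv]
    module
  funext x
  ext u
  rw [mem_resAvg]
  simp only [SVP.smul, Set.mem_image]
  constructor
  · rintro ⟨v, hv, hx⟩
    refine ⟨α⁻¹ • u, ?_, by rw [smul_smul, mul_inv_cancel₀ hα, one_smul]⟩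
    rw [mem_resAvg]
    refine ⟨v, fun i => ?_, hx⟩
    obtain ⟨a, ha, hua⟩ := hv i
    have : α⁻¹ • u + (α * μ)⁻¹ • x - (α * μ)⁻¹ • v i = a := by
      rw [key, ← hua, smul_smul, inv_mul_cancel₀ hα, one_smul]
    rwa [this]
  · rintro ⟨p, hp, rfl⟩
    rw [mem_resAvg] at hp
    obtain ⟨v, hv, hx⟩ := hp
    refine ⟨v, fun i => ?_, hx⟩
    refine ⟨p + (α * μ)⁻¹ • x - (α * μ)⁻¹ • v i, hv i, ?_⟩
    simp only [smul_sub, smul_add, smul_smul, mul_inv, ← mul_assoc, mul_inv_cancel₀ hα, one_mul]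

lemma resAvg_self {n : ℕ} (hn : 0 < n) {μ : ℝ} (hμ : 0 < μ) (lam : Fin n → ℝ)
    (hsum : ∑ i, lam i = 1) (B : H → Set H) (hB : SVP.IsMonotone B) :
    SVP.resAvg μ lam (fun _ => B) = B := by
  funext x
  ext u
  rw [mem_resAvg]
  constructor
  · rintro ⟨v, hv, hx⟩
    have hvc : ∀ i j, v i = v j := by
      intro i j
      have h0 := hB (hv i) (hv j)
      have hd : (u + μ⁻¹ • x - μ⁻¹ • v i) - (u + μ⁻¹ • x - μ⁻¹ • v j)
          = -μ⁻¹ • (v i - v j) := by module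
      rw [hd, real_inner_smul_right] at h0
      have hnn : (0:ℝ) ≤ inner ℝ (v i - v j) (v i - v j) := real_inner_self_nonneg
      have : (inner ℝ (v i - v j) (v i - v j) : ℝ) = 0 := by
        nlinarith [inv_pos.mpr hμ]
      have := inner_self_eq_zero.mp this
      exact sub_eq_zero.mp this
    set i0 : Fin n := ⟨0, hn⟩
    have hxv : x = v i0 := by
      rw [hx]
      calc ∑ i, lam i • v i = ∑ i, lam i • v i0 := by
            refine Finset.sum_congr rfl fun i _ => by rw [hvc i i0]
        _ = (∑ i, lam i) • v i0 := by rw [Finset.sum_smul]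
        _ = v i0 := by rw [hsum, one_smul]
    have := hv i0
    rw [← hxv] at this
    have he : u + μ⁻¹ • x - μ⁻¹ • x = u := by module
    rwa [he] at this
  · intro hu
    refine ⟨fun _ => x, fun i => ?_, ?_⟩
    · have he : u + μ⁻¹ • x - μ⁻¹ • x = u := by module
      rwa [he]
    · rw [← Finset.sum_smul, hsum, one_smul]

lemma smul_inv_smul' {c : ℝ} (hc : c ≠ 0) (S : H → Set H) :
    SVP.smul c⁻¹ (SVP.smul c S) = S := by
  funext x
  simp [SVP.smul, Set.image_image, smul_smul, inv_mul_cancel₀ hc]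

end Aux


/-- (a) `R_μ(αA, λ) = α R_{αμ}(A, λ)` for `α > 0`; in particular
`R_μ(A, λ) = μ⁻¹ R₁(μA, λ)`. (b) If all `Aᵢ` equal a maximally monotone `A`,
then `R_μ(A, λ) = A`. -/
theorem stmt4 {n : ℕ} (hn : 0 < n) {μ : ℝ} (hμ : 0 < μ) (lam : Fin n → ℝ)
    (hpos : ∀ i, 0 < lam i) (hsum : ∑ i, lam i = 1) (A : Fin n → H → Set H)
    (hA : ∀ i, SVP.IsMaxMonotone (A i)) :
    (∀ α : ℝ, 0 < α →
      SVP.resAvg μ lam (fun i => SVP.smul α (A i))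
        = SVP.smul α (SVP.resAvg (α * μ) lam A)) ∧
    SVP.resAvg μ lam A = SVP.smul μ⁻¹ (SVP.resAvg 1 lam (fun i => SVP.smul μ (A i))) ∧
    (∀ B : H → Set H, SVP.IsMaxMonotone B → (∀ i, A i = B) →
      SVP.resAvg μ lam A = B) := by
  refine ⟨fun α hα => resAvg_smul_eq hα.ne' μ lam A, ?_, fun B hB hAB => ?_⟩
  · rw [resAvg_smul_eq hμ.ne' 1 lam A, mul_one, smul_inv_smul' hμ.ne']
  · have hAeq : A = fun _ => B := funext hAB
    rw [hAeq]
    exact resAvg_self hn hμ lam hsum B hB.1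
end

section
/- Let H be a real Hilbert space, I = {1,...,n}, μ > 0, and for each i ∈ I let λ_i > 0 with Σ_{i∈I} λ_i = 1 and let A_i : H ⇉ H be maximally monotone. If there exists i₀ ∈ I such that A_{i₀} is disjointly injective (i.e., A_{i₀}x ∩ A_{i₀}y = ∅ whenever x ≠ y), then R_μ(A, λ) is disjointly injective. -/
open RealInnerProductSpace

variable {H : Type*} [NormedAddCommGroup H] [InnerProductSpace ℝ H] [CompleteSpace H]

/-- `A` is disjointly injective if `A x ∩ A y = ∅` for all distinct `x, y`. -/
def DisjointlyInjective (A : H → Set H) : Prop :=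
  ∀ ⦃x y : H⦄, x ≠ y → A x ∩ A y = ∅

lemma mem_resAvg_iff {n : ℕ} (μ : ℝ) (lam : Fin n → ℝ) (A : Fin n → H → Set H)
    (x u : H) :
    u ∈ SVP.resAvg μ lam A x ↔
      ∃ v : Fin n → H, (∀ i, ∃ a ∈ A i (v i), u + μ⁻¹ • x = a + μ⁻¹ • v i) ∧
        x = ∑ i, lam i • v i := by
  simp only [SVP.resAvg, SVP.sub, SVP.inv, SVP.lcomb, SVP.smul, SVP.add, SVP.id',
    Set.mem_setOf_eq, Set.image_singleton, Set.mem_singleton_iff]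
  constructor
  · rintro ⟨z, ⟨v, hv, hx⟩, b, rfl, rfl⟩
    refine ⟨v, fun i => ?_, hx⟩
    obtain ⟨a, ha, b', hb', hz⟩ := hv i
    subst hb'
    exact ⟨a, ha, by rw [sub_add_cancel, hz]⟩
  · rintro ⟨v, hv, hx⟩
    refine ⟨u + μ⁻¹ • x, ⟨v, fun i => ?_, hx⟩, μ⁻¹ • x, rfl, by abel⟩
    obtain ⟨a, ha, hz⟩ := hv i
    exact ⟨a, ha, μ⁻¹ • v i, rfl, hz⟩

/-- Disjoint injectivity is dominant w.r.t. the resolvent average. -/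
theorem stmt16 {n : ℕ} (hn : 0 < n) {μ : ℝ} (hμ : 0 < μ) (lam : Fin n → ℝ)
    (hpos : ∀ i, 0 < lam i) (hsum : ∑ i, lam i = 1) (A : Fin n → H → Set H)
    (hA : ∀ i, SVP.IsMaxMonotone (A i))
    (hdi : ∃ i₀, DisjointlyInjective (A i₀)) :
    DisjointlyInjective (SVP.resAvg μ lam A) := by
  obtain ⟨i₀, hi₀⟩ := hdi
  intro x y hxy
  by_contra hne
  obtain ⟨u, hux, huy⟩ := Set.nonempty_iff_ne_empty.mpr hne
  rw [mem_resAvg_iff] at hux huy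
  obtain ⟨v, hv, hx⟩ := hux
  obtain ⟨v', hv', hy⟩ := huy
  choose a ha hz using hv
  choose a' ha' hz' using hv'
  -- key pointwise identity
  have key : ∀ i, a i - a' i = μ⁻¹ • ((x - y) - (v i - v' i)) := by
    intro i
    have h1 := hz i
    have h2 := hz' i
    have e1 : a i = u + μ⁻¹ • x - μ⁻¹ • v i := by rw [h1]; abel
    have e2 : a' i = u + μ⁻¹ • y - μ⁻¹ • v' i := by rw [h2]; abel
    rw [e1, e2]
    module
  have hμ' : 0 < μ⁻¹ := inv_pos.mpr hμ
  set d : Fin n → H := fun i => v i - v' i with hd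
  set db : H := x - y with hdb
  -- monotonicity gives ‖d i‖² ≤ ⟪d i, db⟫
  have mono : ∀ i, ‖d i‖ ^ 2 ≤ ⟪d i, db⟫ := by
    intro i
    have h0 : (0 : ℝ) ≤ ⟪v i - v' i, a i - a' i⟫ := (hA i).1 (ha i) (ha' i)
    rw [key i, real_inner_smul_right] at h0
    have ht : (0 : ℝ) ≤ ⟪v i - v' i, db - (v i - v' i)⟫ :=
      (mul_nonneg_iff_of_pos_left hμ').mp h0
    rw [inner_sub_right] at ht
    have hself : ⟪v i - v' i, v i - v' i⟫ = ‖d i‖ ^ 2 := by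
      rw [real_inner_self_eq_norm_sq]
    simp only [hd] at *
    linarith
  -- the weighted average of d is db
  have havg : ∑ i, lam i • d i = db := by
    simp only [hd, smul_sub, Finset.sum_sub_distrib]
    rw [← hx, ← hy]
  -- sum of squared deviations is ≤ 0
  have hsumineq : ∑ i, lam i * ‖d i - db‖ ^ 2 ≤ 0 := by
    have hexp : ∀ i, ‖d i - db‖ ^ 2 = ‖d i‖ ^ 2 - 2 * ⟪d i, db⟫ + ‖db‖ ^ 2 := by
      intro i
      rw [norm_sub_sq_real]
    have h1 : ∑ i, lam i * ⟪d i, db⟫ = ‖db‖ ^ 2 := by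
      have : ⟪∑ i, lam i • d i, db⟫ = ∑ i, lam i * ⟪d i, db⟫ := by
        rw [sum_inner]
        simp [real_inner_smul_left]
      rw [havg, real_inner_self_eq_norm_sq] at this
      exact this.symm
    calc ∑ i, lam i * ‖d i - db‖ ^ 2
        = (∑ i, lam i * ‖d i‖ ^ 2) - 2 * (∑ i, lam i * ⟪d i, db⟫)
            + (∑ i, lam i) * ‖db‖ ^ 2 := by
          have hterm : ∀ i, lam i * ‖d i - db‖ ^ 2 =
              lam i * ‖d i‖ ^ 2 - 2 * (lam i * ⟪d i, db⟫) + lam i * ‖db‖ ^ 2 := fun i => by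
            rw [hexp i]; ring
          rw [Finset.sum_congr rfl fun i _ => hterm i, Finset.sum_add_distrib,
            Finset.sum_sub_distrib, ← Finset.mul_sum, ← Finset.sum_mul]
      _ = (∑ i, lam i * ‖d i‖ ^ 2) - 2 * ‖db‖ ^ 2 + ‖db‖ ^ 2 := by rw [h1, hsum]; ring
      _ ≤ (∑ i, lam i * ⟪d i, db⟫) - 2 * ‖db‖ ^ 2 + ‖db‖ ^ 2 := by
          have : ∑ i, lam i * ‖d i‖ ^ 2 ≤ ∑ i, lam i * ⟪d i, db⟫ :=
            Finset.sum_le_sum fun i _ =>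
              mul_le_mul_of_nonneg_left (mono i) (hpos i).le
          linarith
      _ = 0 := by rw [h1]; ring
  -- each term is nonneg, so the i₀ term vanishes
  have hzero : lam i₀ * ‖d i₀ - db‖ ^ 2 = 0 := by
    have hnonneg : ∀ i ∈ Finset.univ, (0 : ℝ) ≤ lam i * ‖d i - db‖ ^ 2 := fun i _ =>
      mul_nonneg (hpos i).le (sq_nonneg _)
    have hle := Finset.sum_le_sum (g := fun i => lam i * ‖d i - db‖ ^ 2)
      (s := Finset.univ) (f := fun _ => (0 : ℝ)) hnonneg
    have : ∑ i, lam i * ‖d i - db‖ ^ 2 = 0 := le_antisymm hsumineq (by simpa using hle)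
    have := (Finset.sum_eq_zero_iff_of_nonneg hnonneg).mp this
    exact this i₀ (Finset.mem_univ i₀)
  have hdeq : d i₀ = db := by
    have : ‖d i₀ - db‖ ^ 2 = 0 := by
      rcases mul_eq_zero.mp hzero with h | h
      · exact absurd h (hpos i₀).ne'
      · exact h
    have : d i₀ - db = 0 := by
      rwa [pow_eq_zero_iff (by norm_num), norm_eq_zero] at this
    exact sub_eq_zero.mp this
  -- conclude: a i₀ = a' i₀ but v i₀ ≠ v' i₀
  have haeq : a i₀ = a' i₀ := by
    have := key i₀
    rw [show (x - y) - (v i₀ - v' i₀) = db - d i₀ from rfl, hdeq, sub_self, smul_zero] at this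
    exact sub_eq_zero.mp this
  have hvne : v i₀ ≠ v' i₀ := by
    intro h
    apply hxy
    have : d i₀ = 0 := by rw [hd]; simp [h]
    rw [this] at hdeq
    exact sub_eq_zero.mp hdeq.symm
  have := hi₀ hvne
  rw [Set.eq_empty_iff_forall_notMem] at this
  exact this (a i₀) ⟨ha i₀, haeq ▸ ha' i₀⟩
end
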